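/- Let H be a weakly finite Hopf algebra over a field k, R a finite dimensional simple k-algebra, and A a finite dimensional H-simple right H-comodule algebra such that A/P is a central simple k-algebra for some maximal ideal P of A. Then R ⊗ A is an H-simple right H-comodule algebra with respect to the comodule structure id ⊗ ρ : R ⊗ A → R ⊗ A ⊗ H. -/

import Mathlib

/- Preliminary notions: right `H`-comodule algebras over a Hopf algebra `H`,
`H`-costable two-sided ideals, `H`-simplicity, semilocal and weakly finite rings,
`(H,A)`-Hopf modules, and freeness of `M/MQ` over `A/Q`. -/

noncomputable section

open TensorProduct MulOpposite

universe u v w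

/-- `ρ` is a (coassociative, counital) right `H`-comodule structure on `M`. -/
def IsComodule (k : Type*) [Field k] (H : Type*) [Ring H] [HopfAlgebra k H]
    (M : Type*) [AddCommGroup M] [Module k M] (ρ : M →ₗ[k] M ⊗[k] H) : Prop :=
  (∀ m : M, (TensorProduct.assoc k M H H) ((TensorProduct.map ρ LinearMap.id) (ρ m)) =
      (TensorProduct.map LinearMap.id (Coalgebra.comul (R := k))) (ρ m)) ∧
  (∀ m : M, (TensorProduct.rid k M)
      ((TensorProduct.map LinearMap.id (Coalgebra.counit (R := k))) (ρ m)) = m)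

/-- The canonical image of `X ⊗[k] H` in `A ⊗[k] H`, for a `k`-subspace `X ⊆ A`. -/
def subTensorH (k : Type*) [Field k] (H : Type*) [Ring H] [HopfAlgebra k H]
    {A : Type*} [Ring A] [Algebra k A] (X : Submodule k A) : Submodule k (A ⊗[k] H) :=
  LinearMap.range (TensorProduct.map X.subtype (LinearMap.id : H →ₗ[k] H))

/-- A two-sided ideal `I` of the comodule algebra `(A, ρA)` is `H`-costable
if `ρA(I) ⊆ I ⊗ H`. -/
def IsCostable (k : Type*) [Field k] (H : Type*) [Ring H] [HopfAlgebra k H]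
    {A : Type*} [Ring A] [Algebra k A] (ρA : A →ₐ[k] A ⊗[k] H)
    (I : TwoSidedIdeal A) : Prop :=
  ∀ a ∈ I, ρA a ∈ subTensorH k H ((TwoSidedIdeal.asIdeal I).restrictScalars k)

/-- The comodule algebra `(A, ρA)` is `H`-simple if it has no `H`-costable
two-sided ideals other than `0` and `A`. -/
def IsHSimple (k : Type*) [Field k] (H : Type*) [Ring H] [HopfAlgebra k H]
    {A : Type*} [Ring A] [Algebra k A] (ρA : A →ₐ[k] A ⊗[k] H) : Prop :=
  ∀ I : TwoSidedIdeal A, IsCostable k H ρA I → I = ⊥ ∨ I = ⊤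

/-- A ring is semilocal if its quotient by the Jacobson radical is
semisimple (Artinian). -/
def IsSemilocalRing (R : Type*) [Ring R] : Prop :=
  IsSemisimpleModule R (R ⧸ (⊥ : Ideal R).jacobson)

/-- A ring `R` is weakly (stably) finite if `XY = 1` implies `YX = 1` for square
matrices over `R`. -/
def WeaklyFinite (R : Type*) [Ring R] : Prop :=
  ∀ (n : ℕ) (X Y : Matrix (Fin n) (Fin n) R), X * Y = 1 → Y * X = 1

/-- Condition (C): the ring `(A/Q) ⊗ H` is weakly finite for every maximal (two-sided)
ideal `Q` of `A`.  Since `(A/Q) ⊗ H ≅ (A ⊗ H)/(Q ⊗ H)` (the ground ring `k` being a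
field), this is expressed via matrix congruences modulo the image of `Q ⊗ H`. -/
def CondC (k : Type*) [Field k] (H : Type*) [Ring H] [HopfAlgebra k H]
    (A : Type*) [Ring A] [Algebra k A] : Prop :=
  ∀ Q : TwoSidedIdeal A, IsCoatom Q →
    ∀ (n : ℕ) (X Y : Matrix (Fin n) (Fin n) (A ⊗[k] H)),
      (∀ i j, (X * Y - 1) i j ∈ subTensorH k H ((TwoSidedIdeal.asIdeal Q).restrictScalars k)) →
      ∀ i j, (Y * X - 1) i j ∈ subTensorH k H ((TwoSidedIdeal.asIdeal Q).restrictScalars k)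

/-- The right `A`-action of a right `A`-module `M` as a `k`-linear map `M ⊗ A → M`. -/
def rAct (k : Type*) [Field k] {A : Type*} [Ring A] [Algebra k A]
    (M : Type*) [AddCommGroup M] [Module k M] [Module Aᵐᵒᵖ M] [IsScalarTower k Aᵐᵒᵖ M] :
    M ⊗[k] A →ₗ[k] M :=
  TensorProduct.lift (LinearMap.mk₂ k (fun m a => op a • m)
    (fun m m' a => smul_add (op a) m m')
    (fun c m a => smul_comm (op a) c m)
    (fun m a a' => by simp only [op_add, add_smul])
    (fun c m a => by
      show op (c • a) • m = c • op a • m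
      rw [op_smul, smul_assoc]))

/-- The right action of the algebra `A ⊗ H` on `M ⊗ H` (`A` acting on the first
tensorand and `H` by multiplication on the second). -/
def hAct (k : Type*) [Field k] (H : Type*) [Ring H] [HopfAlgebra k H]
    {A : Type*} [Ring A] [Algebra k A]
    (M : Type*) [AddCommGroup M] [Module k M] [Module Aᵐᵒᵖ M] [IsScalarTower k Aᵐᵒᵖ M] :
    (M ⊗[k] H) ⊗[k] (A ⊗[k] H) →ₗ[k] M ⊗[k] H :=
  (TensorProduct.map (rAct k (A := A) M) (LinearMap.mul' k H)) ∘ₗ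
    (TensorProduct.tensorTensorTensorComm k M H A H).toLinearMap

/-- `M` together with `ρM` is an object of `𝓜_A^H`: a right `A`-module with a right
`H`-comodule structure satisfying `ρ_M(ma) = ρ_M(m)ρ_A(a)`. -/
def IsHopfModule (k : Type*) [Field k] (H : Type*) [Ring H] [HopfAlgebra k H]
    {A : Type*} [Ring A] [Algebra k A] (ρA : A →ₐ[k] A ⊗[k] H)
    (M : Type*) [AddCommGroup M] [Module k M] [Module Aᵐᵒᵖ M] [IsScalarTower k Aᵐᵒᵖ M]
    (ρM : M →ₗ[k] M ⊗[k] H) : Prop :=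
  IsComodule k H M ρM ∧
    ∀ (a : A) (m : M), ρM (op a • m) = hAct k H (A := A) M ((ρM m) ⊗ₜ[k] (ρA a))

/-- The submodule `M·Q` of a right `A`-module `M`, for a two-sided ideal `Q ⊆ A`. -/
def smulIdeal {A : Type u} [Ring A] (M : Type v) [AddCommGroup M] [Module Aᵐᵒᵖ M]
    (Q : TwoSidedIdeal A) : Submodule Aᵐᵒᵖ M :=
  Submodule.span Aᵐᵒᵖ {x : M | ∃ q ∈ Q, ∃ m : M, x = op q • m}

/-- `M/MQ` is a free `A/Q`-module: there is a family of elements of `M` whose image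
in `M/MQ` is a basis over `A/Q` (it spans `M` modulo `MQ` and is linearly
independent modulo `Q`). -/
def IsFreeModulo {A : Type u} [Ring A] (M : Type v) [AddCommGroup M] [Module Aᵐᵒᵖ M]
    (Q : TwoSidedIdeal A) : Prop :=
  ∃ (ι : Type v) (e : ι → M),
    (Submodule.span Aᵐᵒᵖ (Set.range e) ⊔ smulIdeal M Q = ⊤) ∧
    ∀ (s : Finset ι) (x : ι → A),
      (∑ i ∈ s, op (x i) • e i) ∈ smulIdeal M Q → ∀ i ∈ s, x i ∈ Q

end


noncomputable section
open TensorProduct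


variable {k : Type u} [Field k]

/-- Contraction of the right tensor factor along a functional. -/
def cofR {M N : Type u} [AddCommGroup M] [Module k M] [AddCommGroup N] [Module k N]
    (f : N →ₗ[k] k) : M ⊗[k] N →ₗ[k] M :=
  (TensorProduct.rid k M).toLinearMap ∘ₗ LinearMap.lTensor M f

@[simp] lemma cofR_tmul {M N : Type u} [AddCommGroup M] [Module k M] [AddCommGroup N]
    [Module k N] (f : N →ₗ[k] k) (m : M) (h : N) :
    cofR f (m ⊗ₜ[k] h) = f h • m := by
  simp [cofR]

/-- Contraction of the left tensor factor along a functional. -/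
def contrL {T A : Type u} [AddCommGroup T] [Module k T] [AddCommGroup A] [Module k A]
    (c : T →ₗ[k] k) : T ⊗[k] A →ₗ[k] A :=
  (TensorProduct.lid k A).toLinearMap ∘ₗ LinearMap.rTensor A c

@[simp] lemma contrL_tmul {T A : Type u} [AddCommGroup T] [Module k T] [AddCommGroup A]
    [Module k A] (c : T →ₗ[k] k) (t : T) (a : A) :
    contrL c (t ⊗ₜ[k] a) = c t • a := by
  simp [contrL]

lemma contrL_lTensor {T A B : Type u} [AddCommGroup T] [Module k T] [AddCommGroup A]
    [Module k A] [AddCommGroup B] [Module k B] (c : T →ₗ[k] k) (g : A →ₗ[k] B)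
    (x : T ⊗[k] A) :
    contrL c (LinearMap.lTensor T g x) = g (contrL c x) := by
  induction x using TensorProduct.induction_on with
  | zero => simp
  | tmul t a => simp
  | add x y hx hy => simp [map_add, hx, hy]

lemma contrL_rTensor {T T' A : Type u} [AddCommGroup T] [Module k T] [AddCommGroup T']
    [Module k T'] [AddCommGroup A] [Module k A] (c : T →ₗ[k] k) (j : T' →ₗ[k] T)
    (x : T' ⊗[k] A) :
    contrL c (LinearMap.rTensor A j x) = contrL (c ∘ₗ j) x := by
  induction x using TensorProduct.induction_on with
  | zero => simp
  | tmul t a => simp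
  | add x y hx hy => simp [map_add, hx, hy]

/-- Membership in the canonical image of `N ⊗ H` is detected by contractions. -/
lemma mem_range_map_subtype_iff {M N : Type u} [AddCommGroup M] [Module k M]
    [AddCommGroup N] [Module k N] (W : Submodule k M) (x : M ⊗[k] N) :
    x ∈ LinearMap.range (TensorProduct.map W.subtype (LinearMap.id : N →ₗ[k] N)) ↔
      ∀ f : N →ₗ[k] k, cofR f x ∈ W := by
  constructor
  · rintro ⟨y, rfl⟩ f
    induction y using TensorProduct.induction_on with
    | zero => simpa using W.zero_mem
    | tmul w h => simpa using W.smul_mem _ w.2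
    | add y z hy hz => simpa [map_add] using W.add_mem hy hz
  · intro hx
    let b := Module.Basis.ofVectorSpace k N
    letI : DecidableEq (Module.Basis.ofVectorSpaceIndex k N) := Classical.decEq _
    let e : M ⊗[k] N ≃ₗ[k] (_ →₀ M) :=
      (LinearEquiv.lTensor M b.repr) ≪≫ₗ TensorProduct.finsuppScalarRight k k M _
    have he : ∀ (z : M ⊗[k] N) i, e z i = cofR (b.coord i) z := by
      intro z i
      induction z using TensorProduct.induction_on with
      | zero => simp
      | tmul m h => simp [e, TensorProduct.finsuppScalarRight_apply_tmul_apply,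
          Module.Basis.coord_apply]
      | add z w hz hw => simp [map_add, hz, hw, Finsupp.add_apply]
    have hsymm : ∀ (i) (m : M), e.symm (Finsupp.single i m) = m ⊗ₜ[k] b i := by
      intro i m
      apply e.injective
      rw [e.apply_symm_apply]
      ext j
      rw [he]
      rcases eq_or_ne i j with rfl | hij
      · simp [Module.Basis.coord_apply]
      · simp [Module.Basis.coord_apply, Finsupp.single_apply, hij,
          Finsupp.single_eq_of_ne hij]
    have hx' : x = (e x).sum fun i m => e.symm (Finsupp.single i m) := by
      conv_lhs => rw [← e.symm_apply_apply x, ← Finsupp.sum_single (e x)]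
      rw [map_finsuppSum]
    rw [hx']
    apply Submodule.sum_mem
    intro i _
    dsimp only
    rw [hsymm]
    have hmem : e x i ∈ W := by rw [he]; exact hx _
    exact ⟨⟨e x i, hmem⟩ ⊗ₜ[k] b i, rfl⟩

lemma eq_zero_of_forall_cofR {M N : Type u} [AddCommGroup M] [Module k M]
    [AddCommGroup N] [Module k N] (x : M ⊗[k] N) (hx : ∀ f : N →ₗ[k] k, cofR f x = 0) :
    x = 0 := by
  have := (mem_range_map_subtype_iff (⊥ : Submodule k M) x).2 (by simpa using hx)
  obtain ⟨y, rfl⟩ := this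
  have h2 : (TensorProduct.map ((⊥ : Submodule k M).subtype) (LinearMap.id : N →ₗ[k] N))
      = 0 := by
    apply TensorProduct.ext'
    intro w n
    simp [(Submodule.mem_bot k).mp w.2]
  rw [h2]
  simp

lemma eq_zero_of_forall_contrL {T A : Type u} [AddCommGroup T] [Module k T]
    [AddCommGroup A] [Module k A] {ι : Type*} (b : Module.Basis ι k T) (y : T ⊗[k] A)
    (hy : ∀ i, contrL (b.coord i) y = 0) : y = 0 := by
  letI : DecidableEq ι := Classical.decEq _
  let e : T ⊗[k] A ≃ₗ[k] (ι →₀ A) :=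
    (LinearEquiv.rTensor A b.repr) ≪≫ₗ TensorProduct.finsuppScalarLeft k A ι
  have he : ∀ (z : T ⊗[k] A) i, e z i = contrL (b.coord i) z := by
    intro z i
    induction z using TensorProduct.induction_on with
    | zero => simp
    | tmul t a => simp [e, TensorProduct.finsuppScalarLeft_apply_tmul_apply,
        Module.Basis.coord_apply]
    | add z w hz hw => simp [map_add, hz, hw, Finsupp.add_apply]
  have h0 : e y = 0 := by ext i; rw [he]; simpa using hy i
  have h2 := congrArg e.symm h0
  simpa using h2

end


noncomputable section
open TensorProduct

variable {k : Type u} [Field k] {H : Type u} [Ring H] [HopfAlgebra k H]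
variable {A : Type u} [Ring A] [Algebra k A] (ρA : A →ₐ[k] A ⊗[k] H)

/-- The family of "generalized coaction coefficient" operators. -/
def PhiOp (f : H →ₗ[k] k) : A →ₗ[k] A := cofR f ∘ₗ ρA.toLinearMap

@[simp] lemma PhiOp_apply (f : H →ₗ[k] k) (a : A) : PhiOp ρA f a = cofR f (ρA a) := rfl

lemma trivial_or_top_of_stable (hsimple : IsHSimple k H ρA) (N : Submodule k A)
    (hl : ∀ (b : A), ∀ a ∈ N, b * a ∈ N) (hr : ∀ (b : A), ∀ a ∈ N, a * b ∈ N)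
    (hst : ∀ (f : H →ₗ[k] k), ∀ a ∈ N, PhiOp ρA f a ∈ N) :
    N = ⊥ ∨ N = ⊤ := by
  let J : TwoSidedIdeal A := TwoSidedIdeal.mk' (N : Set A) N.zero_mem
    (fun hx hy => N.add_mem hx hy) (fun hx => N.neg_mem hx)
    (fun hy => hl _ _ hy) (fun hx => hr _ _ hx)
  have hJ : ∀ x : A, x ∈ J ↔ x ∈ N := fun x =>
    TwoSidedIdeal.mem_mk' (N : Set A) _ _ _ _ _ x
  have hres : (TwoSidedIdeal.asIdeal J).restrictScalars k = N := by
    ext x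
    simp only [Submodule.restrictScalars_mem, TwoSidedIdeal.mem_asIdeal]
    exact hJ x
  have hcost : IsCostable k H ρA J := by
    intro a ha
    unfold subTensorH
    rw [hres, mem_range_map_subtype_iff]
    intro f
    exact hst f a ((hJ a).1 ha)
  rcases hsimple J hcost with h | h
  · left
    ext x
    simp only [Submodule.mem_bot]
    rw [← hJ, h]
    exact TwoSidedIdeal.mem_bot A
  · right
    ext x
    simp only [Submodule.mem_top, iff_true]
    rw [← hJ, h]
    exact TwoSidedIdeal.mem_top A
end


noncomputable section
open TensorProduct

variable {k : Type u} [Field k] {H : Type u} [Ring H] [HopfAlgebra k H]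
variable {A : Type u} [Ring A] [Algebra k A] (ρA : A →ₐ[k] A ⊗[k] H)

/-- Endomorphisms of `A` in the category of costable bimodules are scalars. -/
lemma endo_is_scalar (hsimple : IsHSimple k H ρA)
    (hP : ∃ P : TwoSidedIdeal A, IsCoatom P ∧
      ∀ a : A, (∀ b : A, a * b - b * a ∈ P) → ∃ c : k, a - algebraMap k A c ∈ P)
    (φ : A →ₗ[k] A)
    (hl : ∀ b a : A, φ (b * a) = b * φ a)
    (hr : ∀ b a : A, φ (a * b) = φ a * b)
    (hst : ∀ (f : H →ₗ[k] k) (a : A), φ (PhiOp ρA f a) = PhiOp ρA f (φ a)) :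
    ∃ c : k, ∀ a, φ a = c • a := by
  obtain ⟨P, hPco, hPcen⟩ := hP
  set ω := φ 1 with hω
  have hφa : ∀ a, φ a = a * ω := by
    intro a
    conv_lhs => rw [← mul_one a]
    rw [hl a 1]
  have hφa' : ∀ a, φ a = ω * a := by
    intro a
    conv_lhs => rw [← one_mul a]
    rw [hr a 1]
  have hcen : ∀ a, a * ω = ω * a := fun a => (hφa a).symm.trans (hφa' a)
  -- ω is coinvariant
  have hcoinv : ρA ω = ω ⊗ₜ[k] 1 := by
    have hz : ∀ f : H →ₗ[k] k, cofR f (ρA ω - ω ⊗ₜ[k] 1) = 0 := by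
      intro f
      have h1 : PhiOp ρA f (1 : A) = f 1 • 1 := by
        simp [PhiOp_apply, map_one, Algebra.TensorProduct.one_def]
      have h2 : PhiOp ρA f ω = f 1 • ω := by
        have h3 := hst f 1
        rw [h1, map_smul] at h3
        exact h3.symm
      simp only [map_sub, cofR_tmul]
      rw [← PhiOp_apply, h2]
      abel
    have := eq_zero_of_forall_cofR _ hz
    rwa [sub_eq_zero] at this
  obtain ⟨c, hc⟩ := hPcen ω (fun b => by rw [hcen b]; simpa using P.zero_mem)
  refine ⟨c, ?_⟩
  set ω' := ω - algebraMap k A c with hω'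
  have hcen' : ∀ a, a * ω' = ω' * a := by
    intro a
    simp only [hω', mul_sub, sub_mul, hcen a]
    rw [← Algebra.commutes c a]
  have hcoinv' : ρA ω' = ω' ⊗ₜ[k] 1 := by
    rw [hω', map_sub, hcoinv, AlgHom.commutes, Algebra.TensorProduct.algebraMap_apply,
      TensorProduct.sub_tmul]
  by_cases hω'0 : ω' = 0
  · intro a
    have : ω = algebraMap k A c := by rwa [sub_eq_zero] at hω'0
    rw [hφa, this, ← Algebra.commutes c a, Algebra.smul_def]
  · exfalso
    set N' : Submodule k A := LinearMap.range (LinearMap.mulRight k ω') with hN'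
    have hmem : ∀ x : A, x * ω' ∈ N' := fun x => ⟨x, rfl⟩
    have hNl : ∀ (b : A), ∀ x ∈ N', b * x ∈ N' := by
      rintro b x ⟨y, rfl⟩
      simp only [LinearMap.mulRight_apply]
      rw [← mul_assoc]
      exact hmem _
    have hNr : ∀ (b : A), ∀ x ∈ N', x * b ∈ N' := by
      rintro b x ⟨y, rfl⟩
      simp only [LinearMap.mulRight_apply]
      rw [mul_assoc, ← hcen' b, ← mul_assoc]
      exact hmem _
    have hNst : ∀ (f : H →ₗ[k] k), ∀ x ∈ N', PhiOp ρA f x ∈ N' := by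
      rintro f x ⟨y, rfl⟩
      simp only [LinearMap.mulRight_apply, PhiOp_apply]
      rw [map_mul, hcoinv']
      have : cofR f (ρA y * ω' ⊗ₜ[k] (1 : H)) = cofR f (ρA y) * ω' := by
        induction ρA y using TensorProduct.induction_on with
        | zero => simp
        | tmul x h => simp [Algebra.TensorProduct.tmul_mul_tmul, smul_mul_assoc]
        | add u v hu hv => simp [add_mul, map_add, hu, hv]
      rw [this]
      exact hmem _
    rcases trivial_or_top_of_stable ρA hsimple N' hNl hNr hNst with h | h
    · have : ω' ∈ N' := by simpa using hmem 1
      rw [h] at this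
      exact hω'0 (by simpa using this)
    · have h1 : (1 : A) ∈ N' := by rw [h]; trivial
      obtain ⟨τ, hτ⟩ := h1
      have hP1 : (1 : A) ∈ P := by
        rw [← hτ]
        exact P.mul_mem_left _ _ hc
      exact hPco.1 (by
        ext x
        simp only [TwoSidedIdeal.mem_top, iff_true]
        simpa using P.mul_mem_left x _ hP1)
end


noncomputable section
open TensorProduct

variable {k : Type u} [Field k] {H : Type u} [Ring H] [HopfAlgebra k H]
variable {A : Type u} [Ring A] [Algebra k A] (ρA : A →ₐ[k] A ⊗[k] H)

lemma exists_vec (hsimple : IsHSimple k H ρA)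
    (hP : ∃ P : TwoSidedIdeal A, IsCoatom P ∧
      ∀ a : A, (∀ b : A, a * b - b * a ∈ P) → ∃ c : k, a - algebraMap k A c ∈ P)
    {T : Type u} [AddCommGroup T] [Module k T] [FiniteDimensional k T]
    (p : A →ₗ[k] T ⊗[k] A)
    (hl : ∀ b a : A, p (b * a) = LinearMap.lTensor T (LinearMap.mulLeft k b) (p a))
    (hr : ∀ b a : A, p (a * b) = LinearMap.lTensor T (LinearMap.mulRight k b) (p a))
    (hst : ∀ (f : H →ₗ[k] k) (a : A), p (PhiOp ρA f a) = LinearMap.lTensor T (PhiOp ρA f) (p a)) :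
    ∃ v : T, ∀ a, p a = v ⊗ₜ[k] a := by
  set n := Module.finrank k T with hn
  let b : Module.Basis (Fin n) k T := Module.finBasisOfFinrankEq k T rfl
  have key : ∀ i : Fin n, ∃ c : k, ∀ a, contrL (b.coord i) (p a) = c • a := by
    intro i
    apply endo_is_scalar ρA hsimple hP (contrL (b.coord i) ∘ₗ p)
    · intro x a
      simp only [LinearMap.comp_apply]
      rw [hl x a, contrL_lTensor]
      simp
    · intro x a
      simp only [LinearMap.comp_apply]
      rw [hr x a, contrL_lTensor]
      simp
    · intro f a
      simp only [LinearMap.comp_apply]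
      rw [hst f a, contrL_lTensor]
  choose c hc using key
  refine ⟨∑ i, c i • b i, fun a => ?_⟩
  have hcoord : ∀ j, b.coord j (∑ i, c i • b i) = c j := by
    intro j
    rw [map_sum]
    rw [Finset.sum_eq_single j]
    · simp
    · intro i _ hij
      simp [Module.Basis.coord_apply, Finsupp.single_apply, hij]
    · simp
  have hz : ∀ j, contrL (b.coord j) (p a - (∑ i, c i • b i) ⊗ₜ[k] a) = 0 := by
    intro j
    rw [map_sub, hc j a, contrL_tmul, hcoord j, sub_self]
  have := eq_zero_of_forall_contrL b _ hz
  rwa [sub_eq_zero] at this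
end


noncomputable section
open TensorProduct

variable {k : Type u} [Field k] {H : Type u} [Ring H] [HopfAlgebra k H]
variable {A : Type u} [Ring A] [Algebra k A] (ρA : A →ₐ[k] A ⊗[k] H)

section TensorHelpers

variable {T T' A' B : Type u} [AddCommGroup T] [Module k T] [AddCommGroup T'] [Module k T']
  [AddCommGroup A'] [Module k A'] [AddCommGroup B] [Module k B]

/-- Shorthand: the image of `V ⊗ A'` inside `T ⊗ A'`. -/
def UA (V : Submodule k T) : Submodule k (T ⊗[k] A') :=
  LinearMap.range (TensorProduct.map V.subtype (LinearMap.id : A' →ₗ[k] A'))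

lemma tmul_mem_UA {V : Submodule k T} {x : T} (hx : x ∈ V) (a : A') :
    x ⊗ₜ[k] a ∈ (UA V : Submodule k (T ⊗[k] A')) :=
  ⟨⟨x, hx⟩ ⊗ₜ[k] a, rfl⟩

lemma UA_mono {V₁ V₂ : Submodule k T} (h : V₁ ≤ V₂) :
    (UA V₁ : Submodule k (T ⊗[k] A')) ≤ UA V₂ := by
  rintro x ⟨y, rfl⟩
  induction y using TensorProduct.induction_on with
  | zero => simpa using Submodule.zero_mem _
  | tmul v a => simpa using tmul_mem_UA (h v.2) a
  | add y z hy hz => simpa [map_add] using Submodule.add_mem _ hy hz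

lemma rTensor_lTensor_comm (j : T →ₗ[k] T') (g : A' →ₗ[k] B) (x : T ⊗[k] A') :
    LinearMap.rTensor B j (LinearMap.lTensor T g x) =
      LinearMap.lTensor T' g (LinearMap.rTensor A' j x) := by
  induction x using TensorProduct.induction_on with
  | zero => simp
  | tmul t a => simp
  | add y z hy hz => simp [map_add, hy, hz]

lemma map_rTensor_UA (j : T →ₗ[k] T') (V : Submodule k T) :
    Submodule.map (LinearMap.rTensor A' j) (UA V) = (UA (V.map j) : Submodule k (T' ⊗[k] A')) := by
  apply le_antisymm
  · rintro x ⟨y, ⟨z, rfl⟩, rfl⟩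
    induction z using TensorProduct.induction_on with
    | zero => simpa using Submodule.zero_mem _
    | tmul v a =>
        simpa using tmul_mem_UA (Submodule.mem_map_of_mem v.2) a
    | add y z hy hz => simpa [map_add] using Submodule.add_mem _ hy hz
  · rintro x ⟨y, rfl⟩
    induction y using TensorProduct.induction_on with
    | zero => simpa using Submodule.zero_mem _
    | tmul v a =>
        obtain ⟨w, hw, hwv⟩ := v.2
        refine ⟨w ⊗ₜ[k] a, tmul_mem_UA hw a, ?_⟩
        simp [hwv]
    | add y z hy hz =>
        simpa [map_add] using Submodule.add_mem _ hy hz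

lemma ker_rTensor_eq_UA (g : T →ₗ[k] T') :
    LinearMap.ker (LinearMap.rTensor A' g) = (UA (LinearMap.ker g) : Submodule k (T ⊗[k] A')) := by
  have hex := Module.Flat.rTensor_exact (R := k) A' (LinearMap.exact_subtype_ker_map g)
  rw [LinearMap.exact_iff] at hex
  rw [hex]
  rfl

lemma ker_rTensor_mkQ (V : Submodule k T) :
    LinearMap.ker (LinearMap.rTensor A' V.mkQ) = (UA V : Submodule k (T ⊗[k] A')) := by
  have hex := Module.Flat.rTensor_exact (R := k) A' (LinearMap.exact_subtype_mkQ V)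
  rw [LinearMap.exact_iff] at hex
  rw [hex]
  rfl

lemma ker_contrL (c : T →ₗ[k] k) :
    LinearMap.ker (contrL (A := A') c) = LinearMap.ker (LinearMap.rTensor A' c) := by
  unfold contrL
  rw [LinearMap.ker_comp]
  ext x
  simp [Submodule.comap_equiv_eq_map_symm]

end TensorHelpers


noncomputable section
open TensorProduct

variable {k : Type u} [Field k] {H : Type u} [Ring H] [HopfAlgebra k H]
variable {A : Type u} [Ring A] [Algebra k A] (ρA : A →ₐ[k] A ⊗[k] H)

/-- **Graph Lemma**: every costable sub-bimodule of `T ⊗ A` is of the form `V ⊗ A`. -/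
lemma graph_lemma (hsimple : IsHSimple k H ρA)
    (hP : ∃ P : TwoSidedIdeal A, IsCoatom P ∧
      ∀ a : A, (∀ b : A, a * b - b * a ∈ P) → ∃ c : k, a - algebraMap k A c ∈ P) :
    ∀ (n : ℕ) (T : Type u) [AddCommGroup T] [Module k T] [FiniteDimensional k T]
      (U : Submodule k (T ⊗[k] A)), Module.finrank k T ≤ n →
      (∀ (x : A), ∀ u ∈ U, LinearMap.lTensor T (LinearMap.mulLeft k x) u ∈ U) →
      (∀ (x : A), ∀ u ∈ U, LinearMap.lTensor T (LinearMap.mulRight k x) u ∈ U) →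
      (∀ (f : H →ₗ[k] k), ∀ u ∈ U, LinearMap.lTensor T (PhiOp ρA f) u ∈ U) →
      ∃ V : Submodule k T, U = (UA V : Submodule k (T ⊗[k] A)) := by
  intro n
  induction n with
  | zero =>
      intro T _ _ _ U hrank _ _ _
      have hT : Subsingleton T := by
        have h0 : Module.finrank k T = 0 := Nat.le_zero.mp hrank
        exact Module.finrank_zero_iff.mp h0
      have hx0 : ∀ x : T ⊗[k] A, x = 0 := by
        intro x
        have hid : (LinearMap.id : T →ₗ[k] T) = 0 := by
          ext t; exact Subsingleton.elim _ _
        calc x = LinearMap.rTensor A (LinearMap.id : T →ₗ[k] T) x := by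
                  rw [LinearMap.rTensor_id]; rfl
          _ = 0 := by rw [hid, LinearMap.rTensor_zero]; rfl
      refine ⟨⊥, ?_⟩
      ext x
      rw [hx0 x]
      simp [Submodule.zero_mem]
  | succ n ih =>
      intro T _ _ _ U hrank hL hR hS
      by_cases hr' : Module.finrank k T ≤ n
      · exact ih T U hr' hL hR hS
      have hrEq : Module.finrank k T = n + 1 := le_antisymm hrank (by omega)
      let b : Module.Basis (Fin (n + 1)) k T := Module.finBasisOfFinrankEq k T hrEq
      let ξ : T →ₗ[k] k := b.coord 0
      have hξ1 : ξ (b 0) = 1 := by simp [ξ, Module.Basis.coord_apply]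
      -- the kernel of ξ has rank n
      have hrange : LinearMap.range ξ = ⊤ := by
        rw [Submodule.eq_top_iff']
        intro x
        exact ⟨x • b 0, by simp [hξ1]⟩
      have hkerrank : Module.finrank k (LinearMap.ker ξ) = n := by
        have h := LinearMap.finrank_range_add_finrank_ker ξ
        rw [hrange, finrank_top, Module.finrank_self, hrEq] at h
        omega
      -- the image ideal
      let π : T ⊗[k] A →ₗ[k] A := contrL ξ
      have hπl : ∀ (x : A) (u : T ⊗[k] A), π (LinearMap.lTensor T (LinearMap.mulLeft k x) u)
          = x * π u := by
        intro x u
        rw [contrL_lTensor]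
        simp [π]
      have hπr : ∀ (x : A) (u : T ⊗[k] A), π (LinearMap.lTensor T (LinearMap.mulRight k x) u)
          = π u * x := by
        intro x u
        rw [contrL_lTensor]
        simp [π]
      have hπs : ∀ (f : H →ₗ[k] k) (u : T ⊗[k] A),
          π (LinearMap.lTensor T (PhiOp ρA f) u) = PhiOp ρA f (π u) := by
        intro f u
        rw [contrL_lTensor]
      -- the A-stuff of jA
      set T' := LinearMap.ker ξ with hT'
      let j : T' →ₗ[k] T := T'.subtype
      let jA : T' ⊗[k] A →ₗ[k] T ⊗[k] A := LinearMap.rTensor A j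
      have hjAinj : Function.Injective jA :=
        Module.Flat.rTensor_preserves_injective_linearMap j (Submodule.injective_subtype T')
      have hkerπ : LinearMap.ker π = LinearMap.range jA := by
        rw [ker_contrL, ker_rTensor_eq_UA]
        rfl
      -- closure properties transfer to the comap
      have hcomapL : ∀ (x : A), ∀ u ∈ U.comap jA,
          LinearMap.lTensor T' (LinearMap.mulLeft k x) u ∈ U.comap jA := by
        intro x u hu
        simp only [Submodule.mem_comap] at hu ⊢
        rw [show jA (LinearMap.lTensor T' (LinearMap.mulLeft k x) u) =
          LinearMap.lTensor T (LinearMap.mulLeft k x) (jA u) from rTensor_lTensor_comm j _ u]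
        exact hL x _ hu
      have hcomapR : ∀ (x : A), ∀ u ∈ U.comap jA,
          LinearMap.lTensor T' (LinearMap.mulRight k x) u ∈ U.comap jA := by
        intro x u hu
        simp only [Submodule.mem_comap] at hu ⊢
        rw [show jA (LinearMap.lTensor T' (LinearMap.mulRight k x) u) =
          LinearMap.lTensor T (LinearMap.mulRight k x) (jA u) from rTensor_lTensor_comm j _ u]
        exact hR x _ hu
      have hcomapS : ∀ (f : H →ₗ[k] k), ∀ u ∈ U.comap jA,
          LinearMap.lTensor T' (PhiOp ρA f) u ∈ U.comap jA := by
        intro f u hu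
        simp only [Submodule.mem_comap] at hu ⊢
        rw [show jA (LinearMap.lTensor T' (PhiOp ρA f) u) =
          LinearMap.lTensor T (PhiOp ρA f) (jA u) from rTensor_lTensor_comm j _ u]
        exact hS f _ hu
      obtain ⟨V'', hV''⟩ := ih T' (U.comap jA) (le_of_eq hkerrank) hcomapL hcomapR hcomapS
      -- the two cases according to the image ideal
      rcases trivial_or_top_of_stable ρA hsimple (U.map π)
        (by rintro x _ ⟨u, hu, rfl⟩; exact ⟨_, hL x u hu, hπl x u⟩)
        (by rintro x _ ⟨u, hu, rfl⟩; exact ⟨_, hR x u hu, hπr x u⟩)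
        (by rintro f _ ⟨u, hu, rfl⟩; exact ⟨_, hS f u hu, hπs f u⟩) with hN | hN
      · -- case π(U) = 0 : U lives in (ker ξ) ⊗ A
        have hUle : U ≤ LinearMap.range jA := by
          intro u hu
          rw [← hkerπ, LinearMap.mem_ker]
          have : π u ∈ U.map π := Submodule.mem_map_of_mem hu
          rw [hN] at this
          simpa using this
        have hUeq : Submodule.map jA (U.comap jA) = U := by
          rw [Submodule.map_comap_eq, inf_eq_right.mpr hUle]
        refine ⟨V''.map j, ?_⟩
        rw [← hUeq, hV'', map_rTensor_UA]
      · -- case π(U) = A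
        set K : Submodule k (T ⊗[k] A) := U ⊓ LinearMap.range jA with hK
        have hKeq : K = (UA (V''.map j) : Submodule k (T ⊗[k] A)) := by
          rw [hK, inf_comm, ← Submodule.map_comap_eq, hV'', map_rTensor_UA]
        set V₁ : Submodule k T := V''.map j with hV₁
        have hV₁ξ : V₁ ≤ LinearMap.ker ξ := by
          rintro x ⟨y, _, rfl⟩
          exact y.2
        set Tq := T ⧸ V₁ with hTq
        let σ : T ⊗[k] A →ₗ[k] Tq ⊗[k] A := LinearMap.rTensor A V₁.mkQ
        have hkerσ : LinearMap.ker σ = K := by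
          rw [ker_rTensor_mkQ, hKeq]
        have hKU : K ≤ U := inf_le_left
        let ξq : Tq →ₗ[k] k := V₁.liftQ ξ hV₁ξ
        let πq : Tq ⊗[k] A →ₗ[k] A := contrL ξq
        have hπqσ : ∀ u : T ⊗[k] A, πq (σ u) = π u := by
          intro u
          show contrL ξq (LinearMap.rTensor A V₁.mkQ u) = contrL ξ u
          rw [contrL_rTensor]
          have hlift : ξq ∘ₗ V₁.mkQ = ξ := Submodule.liftQ_mkQ V₁ ξ hV₁ξ
          rw [hlift]
        set W : Submodule k (Tq ⊗[k] A) := U.map σ with hW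
        -- injectivity of πq on W
        have hWinj : ∀ w ∈ W, πq w = 0 → w = 0 := by
          rintro w ⟨u, hu, rfl⟩ hw0
          rw [hπqσ u] at hw0
          have : u ∈ K := by
            rw [hK]
            refine ⟨hu, ?_⟩
            rw [← hkerπ]
            exact hw0
          rw [← hkerσ] at this
          exact this
        -- surjectivity of πq on W
        have hWsurj : ∀ a : A, ∃ w ∈ W, πq w = a := by
          intro a
          have : a ∈ U.map π := by rw [hN]; trivial
          obtain ⟨u, hu, hua⟩ := this
          exact ⟨σ u, Submodule.mem_map_of_mem hu, by rw [hπqσ u, hua]⟩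
        -- closure properties of W
        have hWcl : ∀ (g : A →ₗ[k] A), (∀ u ∈ U, LinearMap.lTensor T g u ∈ U) →
            ∀ w ∈ W, LinearMap.lTensor Tq g w ∈ W := by
          rintro g hg w ⟨u, hu, rfl⟩
          rw [← rTensor_lTensor_comm]
          exact Submodule.mem_map_of_mem (hg u hu)
        -- the section p : A → Tq ⊗ A
        let πW : W →ₗ[k] A := πq.domRestrict W
        have hπWbij : Function.Bijective πW := by
          constructor
          · intro w w' hww'
            have h0 : πq ((w : Tq ⊗[k] A) - (w' : Tq ⊗[k] A)) = 0 := by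
              rw [map_sub]
              change πW w - πW w' = 0
              rw [hww', sub_self]
            have := hWinj ((w : Tq ⊗[k] A) - w') (Submodule.sub_mem _ w.2 w'.2) h0
            exact Subtype.ext (by rwa [sub_eq_zero] at this)
          · intro a
            obtain ⟨w, hw, hwa⟩ := hWsurj a
            exact ⟨⟨w, hw⟩, hwa⟩
        let eW := LinearEquiv.ofBijective πW hπWbij
        let p : A →ₗ[k] Tq ⊗[k] A := W.subtype ∘ₗ eW.symm.toLinearMap
        have hpW : ∀ a, p a ∈ W := fun a => (eW.symm a).2
        have hπp : ∀ a, πq (p a) = a := by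
          intro a
          show πW (eW.symm a) = a
          exact eW.apply_symm_apply a
        have hpeq : ∀ (g : A →ₗ[k] A), (∀ w ∈ W, LinearMap.lTensor Tq g w ∈ W) →
            ∀ a, p (g a) = LinearMap.lTensor Tq g (p a) := by
          intro g hg a
          have h1 : p (g a) - LinearMap.lTensor Tq g (p a) ∈ W :=
            Submodule.sub_mem _ (hpW _) (hg _ (hpW a))
          have h2 : πq (p (g a) - LinearMap.lTensor Tq g (p a)) = 0 := by
            rw [map_sub, hπp, contrL_lTensor, hπp, sub_self]
          have := hWinj _ h1 h2
          rwa [sub_eq_zero] at this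
        obtain ⟨vq, hvq⟩ := exists_vec ρA hsimple hP p
          (fun x a => hpeq (LinearMap.mulLeft k x) (hWcl _ (hL x)) a)
          (fun x a => hpeq (LinearMap.mulRight k x) (hWcl _ (hR x)) a)
          (fun f a => hpeq (PhiOp ρA f) (hWcl _ (hS f)) a)
        obtain ⟨v, hv⟩ := V₁.mkQ_surjective vq
        refine ⟨V₁ ⊔ (Submodule.span k {v}), ?_⟩
        have hvV : v ∈ V₁ ⊔ Submodule.span k {v} :=
          Submodule.mem_sup_right (Submodule.mem_span_singleton_self v)
        have hσu : ∀ u ∈ U, σ u = vq ⊗ₜ[k] π u := by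
          intro u hu
          rw [← hvq (π u)]
          have h1 : σ u - p (π u) ∈ W :=
            Submodule.sub_mem _ (Submodule.mem_map_of_mem hu) (hpW _)
          have h2 : πq (σ u - p (π u)) = 0 := by
            rw [map_sub, hπqσ, hπp, sub_self]
          have := hWinj _ h1 h2
          rwa [sub_eq_zero] at this
        have hvmem : ∀ a : A, v ⊗ₜ[k] a ∈ U := by
          intro a
          have : a ∈ U.map π := by rw [hN]; trivial
          obtain ⟨u, hu, hua⟩ := this
          have hσdiff : σ (u - v ⊗ₜ[k] a) = 0 := by
            rw [map_sub, hσu u hu, hua]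
            show vq ⊗ₜ[k] a - LinearMap.rTensor A V₁.mkQ (v ⊗ₜ[k] a) = 0
            rw [LinearMap.rTensor_tmul, hv, sub_self]
          have : u - v ⊗ₜ[k] a ∈ K := by rw [← hkerσ]; exact hσdiff
          have h3 : u - v ⊗ₜ[k] a ∈ U := hKU this
          have := U.sub_mem hu h3
          simpa using this
        apply le_antisymm
        · intro u hu
          have hdiff : u - v ⊗ₜ[k] π u ∈ K := by
            rw [← hkerσ, LinearMap.mem_ker, map_sub, hσu u hu]
            show vq ⊗ₜ[k] π u - LinearMap.rTensor A V₁.mkQ (v ⊗ₜ[k] π u) = 0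
            rw [LinearMap.rTensor_tmul, hv, sub_self]
          rw [hKeq] at hdiff
          have h1 : u - v ⊗ₜ[k] π u ∈ (UA (V₁ ⊔ Submodule.span k {v}) :
              Submodule k (T ⊗[k] A)) := UA_mono le_sup_left hdiff
          have h2 : v ⊗ₜ[k] π u ∈ (UA (V₁ ⊔ Submodule.span k {v}) :
              Submodule k (T ⊗[k] A)) := tmul_mem_UA hvV _
          simpa using Submodule.add_mem _ h1 h2
        · rintro x ⟨y, rfl⟩
          induction y using TensorProduct.induction_on with
          | zero => simpa using U.zero_mem
          | tmul w a =>
              obtain ⟨x₁, hx₁, x₂, hx₂, hx⟩ := Submodule.mem_sup.mp w.2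
              obtain ⟨cc, rfl⟩ := Submodule.mem_span_singleton.mp hx₂
              have h1 : x₁ ⊗ₜ[k] a ∈ U := by
                have : x₁ ⊗ₜ[k] a ∈ (UA V₁ : Submodule k (T ⊗[k] A)) := tmul_mem_UA hx₁ a
                rw [← hKeq] at this
                exact hKU this
              have h2 : (cc • v) ⊗ₜ[k] a ∈ U := by
                rw [TensorProduct.smul_tmul]
                exact hvmem _
              have : (w : T) ⊗ₜ[k] a ∈ U := by
                rw [← hx, TensorProduct.add_tmul]
                exact U.add_mem h1 h2
              simpa using this
          | add y z hy hz =>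
              simpa [map_add] using U.add_mem hy hz
end

open TensorProduct MulOpposite in
/-- **Corollary 3.8.** Let `R` be a finite dimensional simple algebra and `A` a finite
dimensional `H`-simple right `H`-comodule algebra such that `A/P` is a central simple
algebra for some maximal (two-sided) ideal `P` of `A`.  If `H` is weakly finite, then
`R ⊗ A` is an `H`-simple comodule algebra for the comodule structure `id ⊗ ρ`. -/
theorem tensor_with_simple_algebra_H_simple
    (k : Type u) [Field k] (H : Type u) [Ring H] [HopfAlgebra k H]
    (R : Type u) [Ring R] [Algebra k R] [FiniteDimensional k R] [IsSimpleRing R]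
    (A : Type u) [Ring A] [Algebra k A] [FiniteDimensional k A]
    (ρA : A →ₐ[k] A ⊗[k] H) (hcomod : IsComodule k H A ρA.toLinearMap)
    (hsimple : IsHSimple k H ρA)
    (hP : ∃ P : TwoSidedIdeal A, IsCoatom P ∧
      ∀ a : A, (∀ b : A, a * b - b * a ∈ P) → ∃ c : k, a - algebraMap k A c ∈ P)
    (hWF : WeaklyFinite H) :
    IsHSimple k H
      (((Algebra.TensorProduct.assoc k k k R A H).symm.toAlgHom).comp
        (Algebra.TensorProduct.map (AlgHom.id k R) ρA)) := by
  
  intro I hI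
  set ρB := ((Algebra.TensorProduct.assoc k k k R A H).symm.toAlgHom).comp
    (Algebra.TensorProduct.map (AlgHom.id k R) ρA) with hρB
  set U : Submodule k (R ⊗[k] A) := (TwoSidedIdeal.asIdeal I).restrictScalars k with hU
  have hmemU : ∀ x : R ⊗[k] A, x ∈ U ↔ x ∈ I := by
    intro x
    rw [hU]
    simp only [Submodule.restrictScalars_mem, TwoSidedIdeal.mem_asIdeal]
  -- A is nontrivial
  haveI : Nontrivial A := by
    obtain ⟨P, hPco, -⟩ := hP
    rcases subsingleton_or_nontrivial A with hs | hn
    · exfalso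
      apply hPco.1
      apply SetLike.ext
      intro x
      simp only [TwoSidedIdeal.mem_top, iff_true]
      have : x = 0 := Subsingleton.elim x 0
      rw [this]; exact P.zero_mem
    · exact hn
  -- multiplication by 1 ⊗ x is lTensor
  have hmulL : ∀ (x : A) (u : R ⊗[k] A),
      ((1 : R) ⊗ₜ[k] x) * u = LinearMap.lTensor R (LinearMap.mulLeft k x) u := by
    intro x u
    induction u using TensorProduct.induction_on with
    | zero => simp
    | tmul r a => simp [Algebra.TensorProduct.tmul_mul_tmul]
    | add u v hu hv => simp [mul_add, map_add, hu, hv]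
  have hmulR : ∀ (x : A) (u : R ⊗[k] A),
      u * ((1 : R) ⊗ₜ[k] x) = LinearMap.lTensor R (LinearMap.mulRight k x) u := by
    intro x u
    induction u using TensorProduct.induction_on with
    | zero => simp
    | tmul r a => simp [Algebra.TensorProduct.tmul_mul_tmul]
    | add u v hu hv => simp [add_mul, map_add, hu, hv]
  -- contraction of the coaction is the lifted PhiOp
  have hassoc : ∀ (f : H →ₗ[k] k) (r : R) (y : A ⊗[k] H),
      cofR f ((Algebra.TensorProduct.assoc k k k R A H).symm (r ⊗ₜ[k] y)) =
        r ⊗ₜ[k] cofR f y := by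
    intro f r y
    induction y using TensorProduct.induction_on with
    | zero => simp
    | tmul a h =>
        have h1 : (Algebra.TensorProduct.assoc k k k R A H).symm (r ⊗ₜ[k] (a ⊗ₜ[k] h)) =
            (r ⊗ₜ[k] a) ⊗ₜ[k] h := by
          rw [AlgEquiv.symm_apply_eq, Algebra.TensorProduct.assoc_tmul]
        rw [h1, cofR_tmul, cofR_tmul, TensorProduct.tmul_smul]
    | add y z hy hz =>
        rw [TensorProduct.tmul_add, map_add, map_add, hy, hz, map_add,
          TensorProduct.tmul_add]
  have hcof : ∀ (f : H →ₗ[k] k) (u : R ⊗[k] A),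
      cofR f (ρB u) = LinearMap.lTensor R (PhiOp ρA f) u := by
    intro f u
    induction u using TensorProduct.induction_on with
    | zero => simp
    | tmul r a =>
        have h1 : ρB (r ⊗ₜ[k] a) =
            (Algebra.TensorProduct.assoc k k k R A H).symm (r ⊗ₜ[k] ρA a) := by
          rw [hρB]
          simp [Algebra.TensorProduct.map_tmul]
        rw [h1, hassoc]
        simp
    | add u v hu hv => simp only [map_add, hu, hv]
  -- closure properties of U
  have hL : ∀ (x : A), ∀ u ∈ U, LinearMap.lTensor R (LinearMap.mulLeft k x) u ∈ U := by
    intro x u hu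
    rw [← hmulL]
    exact (hmemU _).2 (I.mul_mem_left _ _ ((hmemU u).1 hu))
  have hR : ∀ (x : A), ∀ u ∈ U, LinearMap.lTensor R (LinearMap.mulRight k x) u ∈ U := by
    intro x u hu
    rw [← hmulR]
    exact (hmemU _).2 (I.mul_mem_right _ _ ((hmemU u).1 hu))
  have hS : ∀ (f : H →ₗ[k] k), ∀ u ∈ U, LinearMap.lTensor R (PhiOp ρA f) u ∈ U := by
    intro f u hu
    rw [← hcof]
    have hc := hI u ((hmemU u).1 hu)
    unfold subTensorH at hc
    rw [← hU] at hc
    exact (mem_range_map_subtype_iff U (ρB u)).1 hc f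
  -- apply the graph lemma
  obtain ⟨V, hV⟩ := graph_lemma ρA hsimple hP (Module.finrank k R) R U (le_refl _) hL hR hS
  -- a functional on A sending 1 to 1
  have hone : (1 : A) ≠ 0 := one_ne_zero
  have hφ : ∃ φ : Module.Dual k A, φ 1 ≠ 0 := by
    by_contra hcon
    push_neg at hcon
    exact hone ((Module.forall_dual_apply_eq_zero_iff k (1 : A)).1 hcon)
  obtain ⟨φ, hφ1⟩ := hφ
  set ξA : A →ₗ[k] k := (φ 1)⁻¹ • φ with hξA
  have hξA1 : ξA 1 = 1 := by
    rw [hξA]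
    simp [inv_mul_cancel₀ hφ1]
  -- extraction of coefficients
  have hUAV : ∀ z ∈ (UA V : Submodule k (R ⊗[k] A)), cofR ξA z ∈ V := by
    rintro z ⟨y, rfl⟩
    induction y using TensorProduct.induction_on with
    | zero => simpa using V.zero_mem
    | tmul v a => simpa using V.smul_mem _ v.2
    | add y z hy hz => simpa [map_add] using V.add_mem hy hz
  have hextr : ∀ y : R, y ⊗ₜ[k] (1 : A) ∈ (UA V : Submodule k (R ⊗[k] A)) → y ∈ V := by
    intro y hy
    have := hUAV _ hy
    rwa [cofR_tmul, hξA1, one_smul] at this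
  have htmul1 : ∀ y ∈ V, y ⊗ₜ[k] (1 : A) ∈ U := by
    intro y hy
    rw [hV]
    exact tmul_mem_UA hy 1
  -- V is a two-sided ideal of R
  have hVl : ∀ (r : R), ∀ x ∈ V, r * x ∈ V := by
    intro r x hx
    apply hextr
    have h1 : x ⊗ₜ[k] (1 : A) ∈ I := (hmemU _).1 (htmul1 x hx)
    have h2 : (r ⊗ₜ[k] (1 : A)) * (x ⊗ₜ[k] (1 : A)) ∈ I := I.mul_mem_left _ _ h1
    have h3 : (r ⊗ₜ[k] (1 : A)) * (x ⊗ₜ[k] (1 : A)) = (r * x) ⊗ₜ[k] (1 : A) := by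
      rw [Algebra.TensorProduct.tmul_mul_tmul, mul_one]
    rw [h3] at h2
    rw [← hV]
    exact (hmemU _).2 h2
  have hVr : ∀ (r : R), ∀ x ∈ V, x * r ∈ V := by
    intro r x hx
    apply hextr
    have h1 : x ⊗ₜ[k] (1 : A) ∈ I := (hmemU _).1 (htmul1 x hx)
    have h2 : (x ⊗ₜ[k] (1 : A)) * (r ⊗ₜ[k] (1 : A)) ∈ I := I.mul_mem_right _ _ h1
    have h3 : (x ⊗ₜ[k] (1 : A)) * (r ⊗ₜ[k] (1 : A)) = (x * r) ⊗ₜ[k] (1 : A) := by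
      rw [Algebra.TensorProduct.tmul_mul_tmul, mul_one]
    rw [h3] at h2
    rw [← hV]
    exact (hmemU _).2 h2
  let JV : TwoSidedIdeal R := TwoSidedIdeal.mk' (V : Set R) V.zero_mem
    (fun hx hy => V.add_mem hx hy) (fun hx => V.neg_mem hx)
    (fun {x y} hy => hVl x y hy) (fun {x y} hx => hVr y x hx)
  have hJV : ∀ x : R, x ∈ JV ↔ x ∈ V := fun x =>
    TwoSidedIdeal.mem_mk' (V : Set R) _ _ _ _ _ x
  rcases IsSimpleRing.simple.eq_bot_or_eq_top JV with hbot | htop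
  · left
    have hUAbot : ∀ z ∈ (UA V : Submodule k (R ⊗[k] A)), z = 0 := by
      rintro z ⟨y, rfl⟩
      induction y using TensorProduct.induction_on with
      | zero => simp
      | tmul v a =>
          have hvJ : (v : R) ∈ JV := (hJV _).2 v.2
          rw [hbot] at hvJ
          have hv0 : (v : R) = 0 := (TwoSidedIdeal.mem_bot R).1 hvJ
          simp [hv0]
      | add y z hy hz => simp [map_add, hy, hz]
    rw [eq_bot_iff]
    intro x hx
    have hxU : x ∈ U := (hmemU x).2 hx
    rw [hV] at hxU
    have hx0 : x = 0 := hUAbot x hxU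
    rw [hx0]
    exact TwoSidedIdeal.zero_mem _
  · right
    have hVtop : ∀ y : R, y ∈ V := by
      intro y
      rw [← hJV, htop]
      exact TwoSidedIdeal.mem_top R
    have hUAtop : ∀ x : R ⊗[k] A, x ∈ (UA V : Submodule k (R ⊗[k] A)) := by
      intro x
      induction x using TensorProduct.induction_on with
      | zero => exact Submodule.zero_mem _
      | tmul r a => exact tmul_mem_UA (hVtop r) a
      | add y z hy hz => exact Submodule.add_mem _ hy hz
    rw [eq_top_iff]
    intro x _
    rw [← hmemU, hV]
    exact hUAtop x
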